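/- Let $A, B \subseteq \mathbb{Z}^n$ be finite nonempty sets. Then there exists a finite nonempty set $C \subseteq \mathbb{Z}^n$ with $A + C = B + C$ (Minkowski sum) if and only if the convex hulls of $A$ and $B$ in $\mathbb{R}^n$ coincide. (Equivalently: the Grothendieck semigroup of the semigroup $\mathcal{K}$ of finite nonempty subsets of $\mathbb{Z}^n$ under Minkowski addition is isomorphic to the semigroup $\mathcal{P}$ of convex integral polytopes under Minkowski sum, via $A \mapsto \Delta(A)$.) -/

import Mathlib

open Pointwise

/-- The embedding of the lattice `ℤⁿ` into `ℝⁿ`. -/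
def latticeEmb (n : ℕ) : (Fin n → ℤ) → (Fin n → ℝ) := fun k i => (k i : ℝ)

namespace AnalogousAux

variable {n : ℕ}

/-- cast `ℚⁿ → ℝⁿ` as a `ℚ`-linear map. -/
noncomputable def ratEmb (n : ℕ) : (Fin n → ℚ) →ₗ[ℚ] (Fin n → ℝ) where
  toFun := fun x i => (x i : ℝ)
  map_add' := by intro x y; funext i; simp only [Pi.add_apply]; push_cast; rfl
  map_smul' := by
    intro q x; funext i
    simp only [Pi.smul_apply, Rat.smul_def, RingHom.id_apply]
    push_cast; ring

lemma ratEmb_apply (x : Fin n → ℚ) (i : Fin n) : ratEmb n x i = (x i : ℝ) := rfl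

lemma ratEmb_injective : Function.Injective (ratEmb n) := by
  intro x y h
  funext i
  have := congrFun h i
  rw [ratEmb_apply, ratEmb_apply] at this
  exact_mod_cast this

/-- cast `ℤⁿ → ℚⁿ` as an `AddMonoidHom`. -/
def intEmb (n : ℕ) : (Fin n → ℤ) →+ (Fin n → ℚ) where
  toFun := fun x i => (x i : ℚ)
  map_zero' := by funext i; simp
  map_add' := by intro x y; funext i; simp only [Pi.add_apply]; push_cast; rfl

lemma intEmb_apply (x : Fin n → ℤ) (i : Fin n) : intEmb n x i = (x i : ℚ) := rfl

lemma intEmb_injective : Function.Injective (intEmb n) := by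
  intro x y h
  funext i
  have := congrFun h i
  rw [intEmb_apply, intEmb_apply] at this
  exact_mod_cast this

lemma latticeEmb_eq_comp : latticeEmb n = (ratEmb n) ∘ (intEmb n) := by
  funext x i; simp [latticeEmb, ratEmb_apply, intEmb_apply]

lemma latticeEmb_injective : Function.Injective (latticeEmb n) := by
  rw [latticeEmb_eq_comp]
  exact ratEmb_injective.comp intEmb_injective

/-- Key base-change fact: a `ℚ`-linearly independent family of rational vectors stays
linearly independent over `ℝ`. -/
lemma linearIndependent_ratEmb {ι : Type*} [Fintype ι] {u : ι → (Fin n → ℚ)}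
    (hu : LinearIndependent ℚ u) :
    LinearIndependent ℝ (fun i => ratEmb n (u i)) := by
  classical
  -- dual family
  set W := Submodule.span ℚ (Set.range u) with hW
  obtain ⟨W', hWc⟩ := Submodule.exists_isCompl W
  set π := W.linearProjOfIsCompl W' hWc with hπ
  set b := Module.Basis.span hu with hb
  set f : ι → ((Fin n → ℚ) →ₗ[ℚ] ℚ) := fun j => (b.coord j) ∘ₗ π with hf
  have hfδ : ∀ j i, f j (u i) = if i = j then 1 else 0 := by
    intro j i
    have hmem : u i ∈ W := Submodule.subset_span (Set.mem_range_self i)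
    have h1 : π (u i) = ⟨u i, hmem⟩ := Submodule.linearProjOfIsCompl_apply_left hWc ⟨u i, hmem⟩
    have h2 : (⟨u i, hmem⟩ : W) = b i := by
      apply Subtype.ext
      simp [hb, Module.Basis.span_apply]
    simp only [hf, LinearMap.comp_apply, h1, h2, Module.Basis.coord_apply, Module.Basis.repr_self]
    simp [Finsupp.single_apply]
  -- the real "dot product" computation
  have key : ∀ (j : ι) (x : Fin n → ℚ),
      ∑ t, (((f j) ((Pi.single t 1 : Fin n → ℚ)) : ℚ) : ℝ) * ((x t : ℚ) : ℝ)
        = (((f j) x : ℚ) : ℝ) := by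
    intro j x
    have hx : x = ∑ t, x t • (Pi.single t 1 : Fin n → ℚ) := by
      conv_lhs => rw [pi_eq_sum_univ x]
      congr 1
      funext t
      congr 1
      funext s
      simp [Pi.single_apply, eq_comm]
    have hfx : f j x = ∑ t, x t * f j (Pi.single t 1 : Fin n → ℚ) := by
      conv_lhs => rw [hx]
      rw [map_sum]
      congr 1
      funext t
      rw [map_smul]
      simp [smul_eq_mul]
    rw [hfx]
    push_cast
    congr 1
    funext t
    ring
  rw [Fintype.linearIndependent_iff]
  intro g hg j
  have happ : ∀ t : Fin n, (∑ i, g i • ratEmb n (u i)) t = 0 := by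
    intro t; rw [hg]; rfl
  have hswap : ∑ t, (((f j) ((Pi.single t 1 : Fin n → ℚ)) : ℚ) : ℝ)
        * (∑ i, g i • ratEmb n (u i)) t
      = ∑ i, g i * (((f j) (u i) : ℚ) : ℝ) := by
    have : ∀ t : Fin n, (∑ i, g i • ratEmb n (u i)) t = ∑ i, g i * ((u i t : ℚ) : ℝ) := by
      intro t
      simp [ratEmb_apply]
    calc ∑ t, (((f j) ((Pi.single t 1 : Fin n → ℚ)) : ℚ) : ℝ) * (∑ i, g i • ratEmb n (u i)) t
        = ∑ t, ∑ i, g i * ((((f j) ((Pi.single t 1 : Fin n → ℚ)) : ℚ) : ℝ) * ((u i t : ℚ) : ℝ)) := by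
          refine Finset.sum_congr rfl fun t _ => ?_
          rw [this t, Finset.mul_sum]
          refine Finset.sum_congr rfl fun i _ => ?_
          ring
      _ = ∑ i, ∑ t, g i * ((((f j) ((Pi.single t 1 : Fin n → ℚ)) : ℚ) : ℝ) * ((u i t : ℚ) : ℝ)) :=
          Finset.sum_comm
      _ = ∑ i, g i * (((f j) (u i) : ℚ) : ℝ) := by
          refine Finset.sum_congr rfl fun i _ => ?_
          rw [← Finset.mul_sum, key j (u i)]
  have hzero : ∑ i, g i * (((f j) (u i) : ℚ) : ℝ) = 0 := by
    rw [← hswap]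
    simp only [happ, mul_zero, Finset.sum_const_zero]
  rw [Finset.sum_congr rfl (fun i _ => by rw [hfδ j i])] at hzero
  simp only [apply_ite, Rat.cast_one, Rat.cast_zero, mul_ite, mul_one, mul_zero] at hzero
  rwa [Finset.sum_ite_eq' Finset.univ j g, if_pos (Finset.mem_univ j)] at hzero



lemma ratEmb_smul_cast (q : ℚ) (x : Fin n → ℚ) :
    ratEmb n (q • x) = (q : ℝ) • ratEmb n x := by
  rw [map_smul]
  funext i
  simp [ratEmb_apply, Rat.smul_def]

/-- If a rational vector is a real linear combination of a `ℚ`-independent family of rational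
vectors, the coefficients are rational. -/
lemma exists_rat_coeffs {ι : Type} [Fintype ι] {u : ι → (Fin n → ℚ)}
    (hu : LinearIndependent ℚ u) {y : Fin n → ℚ} {w : ι → ℝ}
    (hrel : ratEmb n y = ∑ i, w i • ratEmb n (u i)) :
    ∃ q : ι → ℚ, ∀ i, (q i : ℝ) = w i := by
  classical
  have hindepR : LinearIndependent ℝ (fun i => ratEmb n (u i)) := linearIndependent_ratEmb hu
  -- y is in the ℚ-span of u
  have hyspan : y ∈ Submodule.span ℚ (Set.range u) := by
    by_contra hy
    set v : Option ι → (Fin n → ℚ) := fun o => o.elim y u with hv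
    have hvLI : LinearIndependent ℚ v := by
      rw [linearIndependent_option]
      exact ⟨hu, hy⟩
    have hvLIR : LinearIndependent ℝ (fun o => ratEmb n (v o)) := linearIndependent_ratEmb hvLI
    rw [linearIndependent_option] at hvLIR
    refine hvLIR.2 ?_
    rw [Submodule.mem_span_range_iff_exists_fun]
    exact ⟨w, hrel.symm⟩
  rw [Submodule.mem_span_range_iff_exists_fun] at hyspan
  obtain ⟨q, hq⟩ := hyspan
  refine ⟨q, ?_⟩
  have hrel2 : ratEmb n y = ∑ i, (q i : ℝ) • ratEmb n (u i) := by
    rw [← hq, map_sum]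
    refine Finset.sum_congr rfl fun i _ => ?_
    exact ratEmb_smul_cast (q i) (u i)
  have hdiff : ∑ i, (w i - (q i : ℝ)) • ratEmb n (u i) = 0 := by
    simp only [sub_smul, Finset.sum_sub_distrib]
    rw [← hrel, ← hrel2, sub_self]
  have := (Fintype.linearIndependent_iff.mp hindepR) _ hdiff
  intro i
  have hi := this i
  linarith [hi]



/-- A lattice point of the real convex hull of a finite lattice set is a rational convex
combination; cleared of denominators this gives a natural-number combination. -/
lemma exists_nat_combination (A : Finset (Fin n → ℤ)) (x : Fin n → ℤ)
    (hx : latticeEmb n x ∈ convexHull ℝ (latticeEmb n '' ↑A)) :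
    ∃ (d : ℕ), 0 < d ∧ ∃ (ι : Type) (_ : Fintype ι) (v : ι → (Fin n → ℤ)) (m : ι → ℕ),
      (∀ i, v i ∈ A) ∧ (∑ i, m i = d) ∧ (∑ i, m i • v i = d • x) := by
  classical
  obtain ⟨ι, hft, z, w, hrange, haff, hpos, hsum1, hsumz⟩ :=
    eq_pos_convex_span_of_mem_convexHull hx
  have hne : Nonempty ι := by
    rcases isEmpty_or_nonempty ι with h | h
    · rw [Finset.univ_eq_empty, Finset.sum_empty] at hsum1
      exact absurd hsum1 zero_ne_one
    · exact h
  have hchoice : ∀ i : ι, ∃ a, a ∈ A ∧ latticeEmb n a = z i := by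
    intro i
    obtain ⟨a, ha, haz⟩ := hrange (Set.mem_range_self i)
    exact ⟨a, ha, haz⟩
  choose v hvA hvz using hchoice
  set vq : ι → (Fin n → ℚ) := fun i => intEmb n (v i) with hvq
  have hzq : ∀ i, ratEmb n (vq i) = z i := by
    intro i
    rw [← hvz i, latticeEmb_eq_comp]; rfl
  set i0 : ι := Classical.arbitrary ι with hi0
  -- linear independence of differences
  have hli : LinearIndependent ℝ (fun i : {j : ι // j ≠ i0} => z i - z i0) := by
    have := (affineIndependent_iff_linearIndependent_vsub ℝ z i0).mp haff
    simpa [vsub_eq_sub] using this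
  set u : {j : ι // j ≠ i0} → (Fin n → ℚ) := fun i => vq i - vq i0 with hu
  have hratu : ∀ i : {j : ι // j ≠ i0}, ratEmb n (u i) = z i - z i0 := by
    intro i
    rw [hu]
    simp only [map_sub, hzq]
  have hliu : LinearIndependent ℝ (fun i => ratEmb n (u i)) := by
    rw [show (fun i => ratEmb n (u i)) = (fun i : {j : ι // j ≠ i0} => z i - z i0) from
      funext hratu]
    exact hli
  have hliQcomp : LinearIndependent ℚ (fun i => ratEmb n (u i)) := by
    refine hliu.restrict_scalars ?_
    intro a b hab
    simp only [Rat.smul_def, mul_one] at hab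
    exact_mod_cast hab
  have huQ : LinearIndependent ℚ u := LinearIndependent.of_comp (ratEmb n) hliQcomp
  -- the relation for the differences
  have hrel : ratEmb n (intEmb n x - vq i0)
      = ∑ i : {j : ι // j ≠ i0}, w i • ratEmb n (u i) := by
    have h1 : ∑ i : {j : ι // j ≠ i0}, w i • ratEmb n (u i)
        = ∑ i ∈ Finset.univ.erase i0, w i • (z i - z i0) := by
      rw [Finset.sum_subtype (p := fun j => j ≠ i0) (Finset.univ.erase i0)
        (fun j => by simp [Finset.mem_erase]) (fun i => w i • (z i - z i0))]
      refine Finset.sum_congr rfl fun i _ => by rw [hratu i]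
    have h2 : ∑ i ∈ Finset.univ.erase i0, w i • (z i - z i0)
        = ∑ i : ι, w i • (z i - z i0) := by
      refine Finset.sum_erase _ ?_
      simp
    have h3 : ∑ i : ι, w i • (z i - z i0) = latticeEmb n x - z i0 := by
      simp only [smul_sub, Finset.sum_sub_distrib, hsumz, ← Finset.sum_smul, hsum1, one_smul]
    rw [h1, h2, h3, map_sub, ← hzq i0, latticeEmb_eq_comp]
    rfl
  obtain ⟨q', hq'⟩ := exists_rat_coeffs huQ hrel
  -- full rational weight family
  set q : ι → ℚ := fun i => if h : i = i0 then 1 - ∑ j : {j : ι // j ≠ i0}, q' j else q' ⟨i, h⟩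
    with hqdef
  have hqw : ∀ i, (q i : ℝ) = w i := by
    intro i
    by_cases h : i = i0
    · rw [h]
      have hsplit : w i0 + ∑ j ∈ Finset.univ.erase i0, w j = 1 := by
        rw [Finset.add_sum_erase _ w (Finset.mem_univ i0), hsum1]
      have hsub : ∑ j ∈ Finset.univ.erase i0, w j = ∑ j : {j : ι // j ≠ i0}, w j :=
        Finset.sum_subtype (p := fun j => j ≠ i0) (Finset.univ.erase i0)
          (fun j => by simp [Finset.mem_erase]) w
      simp only [hqdef, dif_pos rfl]
      push_cast
      rw [show ∑ j : {j : ι // j ≠ i0}, ((q' j : ℝ)) = ∑ j : {j : ι // j ≠ i0}, w j from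
        Finset.sum_congr rfl fun j _ => hq' j]
      rw [← hsub]
      linarith [hsplit]
    · simp only [hqdef, dif_neg h]
      exact hq' ⟨i, h⟩
  have hqpos : ∀ i, 0 ≤ q i := by
    intro i
    have : (0 : ℝ) < (q i : ℝ) := by rw [hqw i]; exact hpos i
    exact_mod_cast this.le
  have hqsum : ∑ i, q i = 1 := by
    have : ((∑ i, q i : ℚ) : ℝ) = 1 := by
      push_cast
      rw [show ∑ i, ((q i : ℝ)) = ∑ i, w i from Finset.sum_congr rfl fun i _ => hqw i, hsum1]
    exact_mod_cast this
  have hqcomb : ∑ i, q i • vq i = intEmb n x := by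
    apply ratEmb_injective
    rw [map_sum]
    have : ∀ i, ratEmb n (q i • vq i) = w i • z i := by
      intro i
      rw [ratEmb_smul_cast, hqw i, hzq i]
    rw [Finset.sum_congr rfl fun i _ => this i, hsumz, latticeEmb_eq_comp]
    rfl
  -- clear denominators
  set d : ℕ := ∏ i, (q i).den with hd
  have hdpos : 0 < d := Finset.prod_pos fun i _ => (q i).pos
  have hint : ∀ i, ∃ k : ℤ, 0 ≤ k ∧ (k : ℚ) = q i * d := by
    intro i
    obtain ⟨c, hc⟩ := Finset.dvd_prod_of_mem (fun i => (q i).den) (Finset.mem_univ i)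
    refine ⟨(q i).num * c, ?_, ?_⟩
    · have h1 : 0 ≤ (q i).num := Rat.num_nonneg.mpr (hqpos i)
      positivity
    · rw [← hd] at hc
      rw [hc]
      push_cast
      rw [← mul_assoc, Rat.mul_den_eq_num]
  choose k hknn hkq using hint
  set m : ι → ℕ := fun i => (k i).toNat with hm
  have hmq : ∀ i, ((m i : ℚ)) = q i * d := by
    intro i
    have h1 : ((k i).toNat : ℤ) = k i := Int.toNat_of_nonneg (hknn i)
    have h2 : (((k i).toNat : ℤ) : ℚ) = q i * d := by rw [h1]; exact hkq i
    rw [hm]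
    exact_mod_cast h2
  refine ⟨d, hdpos, ι, hft, v, m, hvA, ?_, ?_⟩
  · have hc : ((∑ i, m i : ℕ) : ℚ) = ((d : ℕ) : ℚ) := by
      push_cast
      rw [Finset.sum_congr rfl fun i (_ : i ∈ Finset.univ) => hmq i]
      rw [← Finset.sum_mul, hqsum, one_mul]
    exact_mod_cast hc
  · apply intEmb_injective
    rw [map_sum]
    have h1 : ∀ i, intEmb n (m i • v i) = (q i * d) • vq i := by
      intro i
      rw [map_nsmul, ← Nat.cast_smul_eq_nsmul ℚ, hmq i]
    rw [Finset.sum_congr rfl fun i (_ : i ∈ Finset.univ) => h1 i]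
    have h2 : ∀ i, (q i * (d : ℚ)) • vq i = (d : ℚ) • (q i • vq i) := by
      intro i
      rw [mul_comm, mul_smul]
    rw [Finset.sum_congr rfl fun i (_ : i ∈ Finset.univ) => h2 i]
    rw [← Finset.smul_sum, hqcomb, map_nsmul, Nat.cast_smul_eq_nsmul]

/-! ### Iterated Minkowski sums of finsets -/

variable (n) in
/-- `k`-fold Minkowski sum of a finset of `ℤⁿ`. -/
def iterSum : ℕ → Finset (Fin n → ℤ) → Finset (Fin n → ℤ)
  | 0, _ => {0}
  | (k+1), A => A + iterSum k A

lemma iterSum_nonempty {A : Finset (Fin n → ℤ)} (hA : A.Nonempty) :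
    ∀ k, (iterSum n k A).Nonempty
  | 0 => ⟨0, Finset.mem_singleton_self 0⟩
  | (k+1) => hA.add (iterSum_nonempty hA k)

lemma iterSum_zero (A : Finset (Fin n → ℤ)) : iterSum n 0 A = {0} := rfl

lemma iterSum_succ (A : Finset (Fin n → ℤ)) (k : ℕ) :
    iterSum n (k+1) A = A + iterSum n k A := rfl

lemma singleton_zero_add (A : Finset (Fin n → ℤ)) : ({0} : Finset (Fin n → ℤ)) + A = A := by
  classical
  ext x
  simp [Finset.mem_add]

lemma iterSum_add (A : Finset (Fin n → ℤ)) (p q : ℕ) :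
    iterSum n (p + q) A = iterSum n p A + iterSum n q A := by
  classical
  induction p with
  | zero => simp [iterSum_zero, singleton_zero_add]
  | succ p ih =>
      have : p + 1 + q = (p + q) + 1 := by omega
      rw [this, iterSum_succ, ih, iterSum_succ, add_assoc]

lemma iterSum_mono {A B : Finset (Fin n → ℤ)} (h : A ⊆ B) :
    ∀ k, iterSum n k A ⊆ iterSum n k B
  | 0 => by simp [iterSum_zero]
  | (k+1) => by
      classical
      rw [iterSum_succ, iterSum_succ]
      exact Finset.add_subset_add h (iterSum_mono h k)

lemma nsmul_mem_iterSum {A : Finset (Fin n → ℤ)} {y : Fin n → ℤ} (hy : y ∈ A) :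
    ∀ k, k • y ∈ iterSum n k A
  | 0 => by simp [iterSum_zero]
  | (k+1) => by
      classical
      rw [iterSum_succ, succ_nsmul']
      exact Finset.add_mem_add hy (nsmul_mem_iterSum hy k)

lemma sum_mem_iterSum {ι : Type*} [DecidableEq ι] {A : Finset (Fin n → ℤ)} (s : Finset ι)
    (v : ι → (Fin n → ℤ)) (h : ∀ i ∈ s, v i ∈ A) :
    ∑ i ∈ s, v i ∈ iterSum n s.card A := by
  classical
  induction s using Finset.induction_on with
  | empty => simp [iterSum_zero]
  | @insert a s ha ih =>
      rw [Finset.sum_insert ha, Finset.card_insert_of_notMem ha, iterSum_succ]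
      exact Finset.add_mem_add (h a (Finset.mem_insert_self a s))
        (ih fun i hi => h i (Finset.mem_insert_of_mem hi))

lemma nsmul_sum_mem_iterSum {ι : Type*} [DecidableEq ι] {A : Finset (Fin n → ℤ)} (s : Finset ι)
    (m : ι → ℕ) (v : ι → (Fin n → ℤ)) (h : ∀ i ∈ s, v i ∈ A) :
    ∑ i ∈ s, m i • v i ∈ iterSum n (∑ i ∈ s, m i) A := by
  classical
  induction s using Finset.induction_on with
  | empty => simp [iterSum_zero]
  | @insert a s ha ih =>
      rw [Finset.sum_insert ha, Finset.sum_insert ha, iterSum_add]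
      exact Finset.add_mem_add (nsmul_mem_iterSum (h a (Finset.mem_insert_self a s)) (m a))
        (ih fun i hi => h i (Finset.mem_insert_of_mem hi))

lemma iterSum_scale {A : Finset (Fin n → ℤ)} {x : Fin n → ℤ} {d : ℕ}
    (h : d • x ∈ iterSum n d A) : ∀ c : ℕ, (c * d) • x ∈ iterSum n (c * d) A := by
  intro c
  induction c with
  | zero => simp [iterSum_zero]
  | succ c ih =>
      have hc : (c + 1) * d = c * d + d := by ring
      rw [hc, iterSum_add, add_nsmul]
      exact Finset.add_mem_add ih h

lemma mem_iterSum_iff {A : Finset (Fin n → ℤ)} {k : ℕ} {x : Fin n → ℤ} :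
    x ∈ iterSum n k A ↔ ∃ f : Fin k → (Fin n → ℤ), (∀ i, f i ∈ A) ∧ ∑ i, f i = x := by
  classical
  induction k generalizing x with
  | zero =>
      simp only [iterSum_zero, Finset.mem_singleton]
      constructor
      · rintro rfl
        exact ⟨fun i => i.elim0, fun i => i.elim0, by simp⟩
      · rintro ⟨f, _, hf⟩
        simp at hf
        exact hf.symm
  | succ k ih =>
      rw [iterSum_succ, Finset.mem_add]
      constructor
      · rintro ⟨y, hy, z, hz, rfl⟩
        obtain ⟨g, hg, hgs⟩ := ih.mp hz
        refine ⟨Fin.cons y g, ?_, ?_⟩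
        · intro i
          refine Fin.cases ?_ ?_ i
          · simpa using hy
          · intro j; simpa using hg j
        · rw [Fin.sum_cons, hgs]
      · rintro ⟨f, hf, rfl⟩
        refine ⟨f 0, hf 0, ∑ i : Fin k, f i.succ, ih.mpr ⟨Fin.tail f, fun i => hf i.succ, rfl⟩,
          (Fin.sum_univ_succ f).symm⟩

/-! ### Forward direction -/

lemma mem_hull_of_add_eq {A B C : Finset (Fin n → ℤ)} (hC : C.Nonempty)
    (h : A + C = B + C) {a : Fin n → ℤ} (ha : a ∈ A) :
    latticeEmb n a ∈ convexHull ℝ (latticeEmb n '' ↑B) := by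
  classical
  -- construct the iterated sequence
  have hstep : ∀ c : {c // c ∈ C}, ∃ p : {b // b ∈ B} × {c' // c' ∈ C},
      (p.1 : Fin n → ℤ) + (p.2 : Fin n → ℤ) = a + (c : Fin n → ℤ) := by
    rintro ⟨c, hc⟩
    have : a + c ∈ B + C := by rw [← h]; exact Finset.add_mem_add ha hc
    rw [Finset.mem_add] at this
    obtain ⟨b, hb, c', hc', hbc⟩ := this
    exact ⟨⟨⟨b, hb⟩, ⟨c', hc'⟩⟩, hbc⟩
  choose step hstepEq using hstep
  obtain ⟨c0, hc0⟩ := hC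
  let seq : ℕ → {c // c ∈ C} := fun k => Nat.rec ⟨c0, hc0⟩ (fun _ p => (step p).2) k
  have hseqdef : ∀ k : ℕ, seq (k+1) = (step (seq k)).2 := fun _ => rfl
  have hseq : ∀ k : ℕ, ((step (seq k)).1 : Fin n → ℤ) + (seq (k+1)).1
      = a + (seq k).1 := by
    intro k
    rw [hseqdef k]
    exact hstepEq (seq k)
  obtain ⟨i, j, hij, hseqeq⟩ := Finite.exists_ne_map_eq_of_infinite seq
  -- wlog i < j
  have key : ∀ i j : ℕ, i < j → seq i = seq j →
      latticeEmb n a ∈ convexHull ℝ (latticeEmb n '' ↑B) := by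
    clear hij hseqeq i j
    intro i j hlt hseqeq
    set b : ℕ → (Fin n → ℤ) := fun k => ((step (seq k)).1 : Fin n → ℤ) with hb
    set c : ℕ → (Fin n → ℤ) := fun k => (seq k).1 with hc
    have htele : ∑ k ∈ Finset.Ico i j, (a + c k) = ∑ k ∈ Finset.Ico i j, (b k + c (k+1)) := by
      refine Finset.sum_congr rfl fun k _ => ?_
      rw [hb, hc]
      exact (hseq k).symm
    have hshift : ∑ k ∈ Finset.Ico i j, c (k+1) = ∑ k ∈ Finset.Ico (i+1) (j+1), c k := by
      rw [Finset.sum_Ico_eq_sum_range, Finset.sum_Ico_eq_sum_range]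
      simp only [Nat.add_sub_add_right]
      refine Finset.sum_congr rfl fun k _ => by ring_nf
    have hsplit1 : ∑ k ∈ Finset.Ico (i+1) (j+1), c k
        = ∑ k ∈ Finset.Ico (i+1) j, c k + c j :=
      Finset.sum_Ico_succ_top (by omega) c
    have hsplit2 : ∑ k ∈ Finset.Ico i j, c k = c i + ∑ k ∈ Finset.Ico (i+1) j, c k :=
      Finset.sum_eq_sum_Ico_succ_bot hlt c
    have hcij : c i = c j := by rw [hc]; exact congrArg _ hseqeq
    have hmain : (j - i) • a = ∑ k ∈ Finset.Ico i j, b k := by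
      have h1 : ∑ k ∈ Finset.Ico i j, (a + c k)
          = (j - i) • a + (c i + ∑ k ∈ Finset.Ico (i+1) j, c k) := by
        rw [Finset.sum_add_distrib, Finset.sum_const, Nat.card_Ico, hsplit2]
      have h2 : ∑ k ∈ Finset.Ico i j, (b k + c (k+1))
          = ∑ k ∈ Finset.Ico i j, b k + (c i + ∑ k ∈ Finset.Ico (i+1) j, c k) := by
        rw [Finset.sum_add_distrib, hshift, hsplit1, hcij]
        abel
      have := h1 ▸ h2 ▸ htele
      exact add_right_cancel this
    -- pass to the hull
    set m : ℕ := j - i with hm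
    have hmpos : 0 < m := by omega
    have hcm : latticeEmb n ((j - i) • a) = ∑ k ∈ Finset.Ico i j, latticeEmb n (b k) := by
      rw [hmain, latticeEmb_eq_comp]
      simp only [Function.comp_apply, map_sum, map_sum]
    have hc1 : Finset.centerMass (Finset.Ico i j) (fun _ => (1:ℝ))
        (fun k => latticeEmb n (b k)) ∈ convexHull ℝ (latticeEmb n '' ↑B) := by
      refine Finset.centerMass_mem_convexHull _ (fun k _ => zero_le_one) ?_ ?_
      · rw [Finset.sum_const, Nat.card_Ico, nsmul_eq_mul, mul_one]
        exact_mod_cast hmpos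
      · intro k _
        exact Set.mem_image_of_mem _ (by simp [hb, Finset.coe_mem])
    have hcmass : Finset.centerMass (Finset.Ico i j) (fun _ => (1:ℝ))
        (fun k => latticeEmb n (b k)) = latticeEmb n a := by
      rw [Finset.centerMass]
      rw [Finset.sum_const, Nat.card_Ico, nsmul_eq_mul, mul_one]
      simp only [one_smul]
      rw [← hcm]
      have : latticeEmb n ((j - i) • a) = (m : ℝ) • latticeEmb n a := by
        rw [← hm, latticeEmb_eq_comp]
        simp only [Function.comp_apply, map_nsmul, map_nsmul]
        rw [← Nat.cast_smul_eq_nsmul ℝ]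
      rw [this, ← hm, inv_smul_smul₀ (by exact_mod_cast hmpos.ne')]
    rwa [hcmass] at hc1
  rcases lt_or_gt_of_ne hij with hlt | hlt
  · exact key i j hlt hseqeq
  · exact key j i hlt hseqeq.symm

/-! ### Backward direction -/

lemma exists_den {A : Finset (Fin n → ℤ)} {x : Fin n → ℤ}
    (hx : latticeEmb n x ∈ convexHull ℝ (latticeEmb n '' ↑A)) :
    ∃ d : ℕ, 0 < d ∧ d • x ∈ iterSum n d A := by
  classical
  obtain ⟨d, hd, ι, hft, v, m, hvA, hsum, hcomb⟩ := exists_nat_combination A x hx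
  letI := hft
  refine ⟨d, hd, ?_⟩
  rw [← hcomb, ← hsum]
  exact nsmul_sum_mem_iterSum Finset.univ m v (fun i _ => hvA i)

lemma add_iterSum_eq {A M : Finset (Fin n → ℤ)} (hAM : A ⊆ M) (hM : M.Nonempty)
    {D : ℕ} (hD : 0 < D) (hDA : ∀ m ∈ M, D • m ∈ iterSum n D A)
    {k : ℕ} (hk : M.card * D ≤ k) :
    A + iterSum n k M = iterSum n (k+1) M := by
  classical
  apply Finset.Subset.antisymm
  · rw [iterSum_succ]
    exact Finset.add_subset_add_right hAM
  · intro x hx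
    obtain ⟨f, hf, hfs⟩ := mem_iterSum_iff.mp hx
    have hMcard : 0 < M.card := Finset.card_pos.mpr hM
    have hcard : M.card * (D-1) < (Finset.univ : Finset (Fin (k+1))).card := by
      rw [Finset.card_univ, Fintype.card_fin]
      have h1 : M.card * (D - 1) < M.card * D :=
        mul_lt_mul_of_pos_left (by omega) hMcard
      omega
    obtain ⟨m, hmM, hfib⟩ := Finset.exists_lt_card_fiber_of_mul_lt_card_of_maps_to
      (fun i _ => hf i) hcard
    have hDfib : D ≤ (Finset.univ.filter (fun i => f i = m)).card := by omega
    obtain ⟨T, hT, hTcard⟩ := Finset.exists_subset_card_eq hDfib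
    have hfT : ∀ i ∈ T, f i = m := fun i hi => (Finset.mem_filter.mp (hT hi)).2
    have hsumT : ∑ i ∈ T, f i = D • m := by
      rw [Finset.sum_congr rfl hfT, Finset.sum_const, hTcard]
    have hsplit : ∑ i ∈ T, f i + ∑ i ∈ Tᶜ, f i = x := by
      rw [Finset.sum_add_sum_compl, hfs]
    have hTc : ∑ i ∈ Tᶜ, f i ∈ iterSum n (k + 1 - D) M := by
      have h2 := sum_mem_iterSum Tᶜ f (fun i _ => hf i)
      have hcc : Tᶜ.card = k + 1 - D := by
        rw [Finset.card_compl, hTcard, Fintype.card_fin]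
      rwa [hcc] at h2
    have hDk : D ≤ k := le_trans (le_trans (Nat.le_mul_of_pos_left D hMcard) hk) le_rfl
    have hDm : D • m ∈ A + iterSum n (D-1) M := by
      have h0 : D • m ∈ iterSum n D A := hDA m hmM
      have h1 : iterSum n D A = A + iterSum n (D-1) A := by
        conv_lhs => rw [show D = (D-1)+1 by omega]
        rw [iterSum_succ]
      have h2 : A + iterSum n (D-1) A ⊆ A + iterSum n (D-1) M :=
        Finset.add_subset_add_left (iterSum_mono hAM (D-1))
      exact h2 (h1 ▸ h0)
    rw [Finset.mem_add] at hDm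
    obtain ⟨a, haA, y, hy, hay⟩ := hDm
    have hz : y + ∑ i ∈ Tᶜ, f i ∈ iterSum n k M := by
      have h3 := Finset.add_mem_add hy hTc
      rw [← iterSum_add] at h3
      have h4 : (D - 1) + (k + 1 - D) = k := by omega
      rwa [h4] at h3
    have hxeq : x = a + (y + ∑ i ∈ Tᶜ, f i) := by
      rw [← hsplit, hsumT, ← hay]
      abel
    rw [hxeq]
    exact Finset.add_mem_add haA hz

end AnalogousAux

/-- Two finite nonempty subsets `A, B ⊆ ℤⁿ` are analogous in the semigroup of finite
nonempty subsets of `ℤⁿ` with Minkowski addition (i.e. `A + C = B + C` for some finite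
nonempty `C`) if and only if their convex hulls in `ℝⁿ` coincide. -/
theorem analogous_iff_convexHull_eq (n : ℕ) (A B : Finset (Fin n → ℤ))
    (hA : A.Nonempty) (hB : B.Nonempty) :
    (∃ C : Finset (Fin n → ℤ), C.Nonempty ∧ A + C = B + C) ↔
      convexHull ℝ (latticeEmb n '' ↑A) = convexHull ℝ (latticeEmb n '' ↑B) := by
  classical
  open AnalogousAux in
  constructor
  · rintro ⟨C, hCne, hACBC⟩
    apply Set.Subset.antisymm
    · refine convexHull_min ?_ (convex_convexHull ℝ _)
      rintro p ⟨a, ha, rfl⟩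
      exact AnalogousAux.mem_hull_of_add_eq hCne hACBC ha
    · refine convexHull_min ?_ (convex_convexHull ℝ _)
      rintro p ⟨b, hb, rfl⟩
      exact AnalogousAux.mem_hull_of_add_eq hCne hACBC.symm hb
  · intro hAB
    set M := A ∪ B with hM
    have hAM : A ⊆ M := Finset.subset_union_left
    have hBM : B ⊆ M := Finset.subset_union_right
    have hMne : M.Nonempty := hA.mono hAM
    have hmA : ∀ m ∈ M, latticeEmb n m ∈ convexHull ℝ (latticeEmb n '' ↑A) := by
      intro m hm
      rcases Finset.mem_union.mp hm with h | h
      · exact subset_convexHull ℝ _ (Set.mem_image_of_mem _ h)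
      · rw [hAB]
        exact subset_convexHull ℝ _ (Set.mem_image_of_mem _ h)
    have hmB : ∀ m ∈ M, latticeEmb n m ∈ convexHull ℝ (latticeEmb n '' ↑B) := by
      intro m hm
      rcases Finset.mem_union.mp hm with h | h
      · rw [← hAB]
        exact subset_convexHull ℝ _ (Set.mem_image_of_mem _ h)
      · exact subset_convexHull ℝ _ (Set.mem_image_of_mem _ h)
    have hdenA : ∀ m ∈ M, ∃ d : ℕ, 0 < d ∧ d • m ∈ AnalogousAux.iterSum n d A :=
      fun m hm => AnalogousAux.exists_den (hmA m hm)
    have hdenB : ∀ m ∈ M, ∃ d : ℕ, 0 < d ∧ d • m ∈ AnalogousAux.iterSum n d B :=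
      fun m hm => AnalogousAux.exists_den (hmB m hm)
    choose! dA hdApos hdAmem using hdenA
    choose! dB hdBpos hdBmem using hdenB
    set D : ℕ := ∏ m ∈ M, (dA m * dB m) with hD
    have hDpos : 0 < D :=
      Finset.prod_pos fun m hm => mul_pos (hdApos m hm) (hdBpos m hm)
    have hscale : ∀ (m : Fin n → ℤ), m ∈ M → ∀ (S : Finset (Fin n → ℤ)) (dS : ℕ),
        0 < dS → dS • m ∈ AnalogousAux.iterSum n dS S → dS ∣ D →
        D • m ∈ AnalogousAux.iterSum n D S := by
      intro m hm S dS hpos hmem hdvd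
      obtain ⟨c, hc⟩ := hdvd
      have := AnalogousAux.iterSum_scale hmem c
      rwa [show c * dS = D by rw [hc]; ring] at this
    have hDA : ∀ m ∈ M, D • m ∈ AnalogousAux.iterSum n D A := by
      intro m hm
      exact hscale m hm A (dA m) (hdApos m hm) (hdAmem m hm)
        (dvd_trans (Dvd.intro _ rfl) (Finset.dvd_prod_of_mem _ hm))
    have hDB : ∀ m ∈ M, D • m ∈ AnalogousAux.iterSum n D B := by
      intro m hm
      exact hscale m hm B (dB m) (hdBpos m hm) (hdBmem m hm)
        (dvd_trans (Dvd.intro_left _ rfl) (Finset.dvd_prod_of_mem _ hm))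
    refine ⟨AnalogousAux.iterSum n (M.card * D) M,
      AnalogousAux.iterSum_nonempty hMne _, ?_⟩
    rw [AnalogousAux.add_iterSum_eq hAM hMne hDpos hDA le_rfl,
      AnalogousAux.add_iterSum_eq hBM hMne hDpos hDB le_rfl]
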